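/- For all real a ≥ 0.2448 and all real x ≥ 6, the function f(x) = (1 - e^{-a x}) / (ln(1 + x) + 0.005) is strictly decreasing in x. -/

import Mathlib

open Real Finset Nat Set

lemma exp_lb : (4.3436:ℝ) < Real.exp 1.4688 := by
  have h := Real.sum_le_exp_of_nonneg (by norm_num : (0:ℝ) ≤ 1.4688) 10
  have h2 : (4.3436:ℝ) < ∑ i ∈ range 10, (1.4688:ℝ) ^ i / i ! := by
    simp only [Finset.sum_range_succ, Finset.sum_range_zero]
    norm_num [Nat.factorial]
  linarith

lemma log7_ub : Real.log 7 < 1.94592 := by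
  rw [Real.log_lt_iff_lt_exp (by norm_num)]
  have h := Real.sum_le_exp_of_nonneg (by norm_num : (0:ℝ) ≤ 1.94592) 14
  have h2 : (7:ℝ) < ∑ i ∈ range 14, (1.94592:ℝ) ^ i / i ! := by
    simp only [Finset.sum_range_succ, Finset.sum_range_zero]
    norm_num [Nat.factorial]
  linarith

-- log y ≤ 0.368 y for y > 0
lemma log_le_aux (y : ℝ) (hy : 0 < y) : Real.log y ≤ 0.368 * y := by
  have h1 : Real.log (y / Real.exp 1) ≤ y / Real.exp 1 - 1 :=
    Real.log_le_sub_one_of_pos (by positivity)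
  rw [Real.log_div (ne_of_gt hy) (ne_of_gt (Real.exp_pos 1)), Real.log_exp] at h1
  have he : (2.7182818283:ℝ) < Real.exp 1 := Real.exp_one_gt_d9
  have h2 : y / Real.exp 1 ≤ 0.368 * y := by
    rw [div_le_iff₀ (Real.exp_pos 1)]
    nlinarith
  linarith

-- exp lower linear bound at 1.4688
lemma exp_lin (t : ℝ) (ht : 1.4688 ≤ t) : 4.3436 * (t - 0.4688) ≤ Real.exp t := by
  have h1 : Real.exp t = Real.exp 1.4688 * Real.exp (t - 1.4688) := by
    rw [← Real.exp_add]; ring_nf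
  have h2 : (t - 1.4688) + 1 ≤ Real.exp (t - 1.4688) := Real.add_one_le_exp _
  have h3 := exp_lb
  have h4 : (0:ℝ) ≤ t - 1.4688 + 1 := by linarith
  calc 4.3436 * (t - 0.4688) = 4.3436 * ((t - 1.4688) + 1) := by ring
    _ ≤ Real.exp 1.4688 * Real.exp (t - 1.4688) :=
        mul_le_mul (le_of_lt h3) h2 h4 (le_of_lt (Real.exp_pos _))
    _ = Real.exp t := h1.symm

lemma key (a x : ℝ) (ha : 0.2448 ≤ a) (hx : 6 ≤ x) :
    a * (1 + x) * (Real.log (1 + x) + 0.005) + 1 < Real.exp (a * x) := by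
  set g : ℝ → ℝ := fun y => Real.exp (a * y) - a * ((1 + y) * (Real.log (1 + y) + 0.005))
  have ha0 : (0:ℝ) < a := by linarith
  have hD : ∀ y ∈ Set.Ici (6:ℝ), HasDerivAt g
      (a * (Real.exp (a * y) - (Real.log (1 + y) + 1.005))) y := by
    intro y hy
    simp only [Set.mem_Ici] at hy
    have h1y : (0:ℝ) < 1 + y := by linarith
    have hu : HasDerivAt (fun y : ℝ => Real.exp (a * y)) (Real.exp (a * y) * a) y := by
      simpa using ((hasDerivAt_id y).const_mul a).exp
    have hlog : HasDerivAt (fun y : ℝ => Real.log (1 + y)) (1 / (1 + y)) y := by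
      have := ((hasDerivAt_id y).const_add 1).log (ne_of_gt h1y)
      simpa using this
    have hv : HasDerivAt (fun y : ℝ => (1 + y) * (Real.log (1 + y) + 0.005))
        (1 * (Real.log (1 + y) + 0.005) + (1 + y) * (1 / (1 + y))) y := by
      exact ((hasDerivAt_id y).const_add 1).mul (hlog.add_const 0.005)
    have := hu.sub ((hv.const_mul a))
    exact this.congr_deriv (by rw [mul_one_div_cancel (ne_of_gt h1y)]; ring)
  have hmono : MonotoneOn g (Set.Ici (6:ℝ)) := by
    apply monotoneOn_of_deriv_nonneg (convex_Ici 6)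
    · exact fun y hy => ((hD y hy).continuousAt).continuousWithinAt
    · intro y hy
      rw [interior_Ici] at hy
      exact ((hD y (Set.mem_Ici.mpr (le_of_lt hy))).differentiableAt).differentiableWithinAt
    · intro y hy
      rw [interior_Ici] at hy
      have hy6 : (6:ℝ) ≤ y := le_of_lt hy
      rw [(hD y hy6).deriv]
      have hay : 1.4688 ≤ a * y := by nlinarith
      have h1 : 4.3436 * (a * y - 0.4688) ≤ Real.exp (a * y) := exp_lin _ hay
      have h2 : Real.log (1 + y) ≤ 0.368 * (1 + y) := log_le_aux _ (by linarith)
      have h3 : 0.2448 * y ≤ a * y := by nlinarith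
      have : Real.exp (a * y) - (Real.log (1 + y) + 1.005) > 0 := by nlinarith
      positivity
  have hg6 : 1 < g 6 := by
    show 1 < Real.exp (a * 6) - a * ((1 + 6) * (Real.log (1 + 6) + 0.005))
    have hay : (1.4688:ℝ) ≤ a * 6 := by linarith
    have h1 : 4.3436 * (a * 6 - 0.4688) ≤ Real.exp (a * 6) := exp_lin _ hay
    have h2 : Real.log (1 + 6) < 1.94592 := by
      rw [show (1:ℝ) + 6 = 7 by norm_num]; exact log7_ub
    nlinarith
  have := hmono (Set.mem_Ici.mpr (le_refl 6)) (Set.mem_Ici.mpr hx) hx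
  have hgx : 1 < g x := lt_of_lt_of_le hg6 this
  simp only [g] at hgx
  nlinarith

theorem stmt_2 (a : ℝ) (ha : 0.2448 ≤ a) :
    StrictAntiOn (fun x : ℝ => (1 - Real.exp (-a * x)) / (Real.log (1 + x) + 0.005))
      (Set.Ici 6) := by
  have ha0 : (0:ℝ) < a := by linarith
  have hD : ∀ x ∈ Set.Ici (6:ℝ), HasDerivAt
      (fun x : ℝ => (1 - Real.exp (-a * x)) / (Real.log (1 + x) + 0.005))
      ((a * Real.exp (-a * x) * (Real.log (1 + x) + 0.005)
        - (1 - Real.exp (-a * x)) * (1 / (1 + x))) / (Real.log (1 + x) + 0.005) ^ 2) x := by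
    intro x hx
    simp only [Set.mem_Ici] at hx
    have h1x : (0:ℝ) < 1 + x := by linarith
    have hL : (0:ℝ) < Real.log (1 + x) + 0.005 := by
      have : (0:ℝ) < Real.log (1 + x) := Real.log_pos (by linarith)
      linarith
    have hu : HasDerivAt (fun x : ℝ => 1 - Real.exp (-a * x)) (a * Real.exp (-a * x)) x := by
      have h1 : HasDerivAt (fun x : ℝ => Real.exp (-a * x)) (Real.exp (-a * x) * (-a)) x := by
        simpa using ((hasDerivAt_id x).const_mul (-a)).exp
      have := (hasDerivAt_const x (1:ℝ)).sub h1
      exact this.congr_deriv (by ring)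
    have hlog : HasDerivAt (fun x : ℝ => Real.log (1 + x)) (1 / (1 + x)) x := by
      have := ((hasDerivAt_id x).const_add 1).log (ne_of_gt h1x)
      simpa using this
    have hv : HasDerivAt (fun x : ℝ => Real.log (1 + x) + 0.005) (1 / (1 + x)) x :=
      hlog.add_const _
    exact hu.div hv (ne_of_gt hL)
  apply strictAntiOn_of_deriv_neg (convex_Ici 6)
  · exact fun x hx => ((hD x hx).continuousAt).continuousWithinAt
  · intro x hx
    rw [interior_Ici] at hx
    have hx6 : (6:ℝ) ≤ x := le_of_lt hx
    rw [(hD x hx6).deriv]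
    have h1x : (0:ℝ) < 1 + x := by linarith
    have hL : (0:ℝ) < Real.log (1 + x) + 0.005 := by
      have : (0:ℝ) < Real.log (1 + x) := Real.log_pos (by linarith)
      linarith
    apply div_neg_of_neg_of_pos _ (by positivity)
    have hk := key a x ha hx6
    have he : Real.exp (-a * x) * Real.exp (a * x) = 1 := by
      rw [← Real.exp_add]; ring_nf; exact Real.exp_zero
    have hep : (0:ℝ) < Real.exp (-a * x) := Real.exp_pos _
    have step : Real.exp (-a * x) * (a * (1 + x) * (Real.log (1 + x) + 0.005)) <
        1 - Real.exp (-a * x) := by nlinarith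
    have hinv : (0:ℝ) < 1 / (1 + x) := by positivity
    have := mul_lt_mul_of_pos_right step hinv
    calc a * Real.exp (-a * x) * (Real.log (1 + x) + 0.005)
          - (1 - Real.exp (-a * x)) * (1 / (1 + x))
        = Real.exp (-a * x) * (a * (1 + x) * (Real.log (1 + x) + 0.005)) * (1 / (1 + x))
          - (1 - Real.exp (-a * x)) * (1 / (1 + x)) := by field_simp
      _ < 0 := by linarith
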